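/- Left-to-right column additions preserve, for every pair of indices (i, j), the rank of the lower-left submatrix M[i..n, 1..j]; consequently the set of pairs (low(R_j), j) over nonzero columns of any reduced form R of M is independent of the reduction performed (uniqueness of the persistence pairing). -/

import Mathlib

/-- Left-to-right column addition over ℤ/2: add column `i` to column `j`. -/
def colAdd {n : ℕ} (M : Matrix (Fin n) (Fin n) (ZMod 2)) (i j : Fin n) :
    Matrix (Fin n) (Fin n) (ZMod 2) :=
  fun r c => if c = j then M r j + M r i else M r c

/-- One step of left-to-right column reduction: add some column `i` to a
later column `j`. -/
def Step {n : ℕ} (M N : Matrix (Fin n) (Fin n) (ZMod 2)) : Prop :=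
  ∃ i j : Fin n, i < j ∧ N = colAdd M i j

/-- `R` is obtained from `M` by a finite sequence of left-to-right column
additions. -/
def Reduces {n : ℕ} (M R : Matrix (Fin n) (Fin n) (ZMod 2)) : Prop :=
  Relation.ReflTransGen Step M R

/-- `i` is the lowest one (largest row index of a nonzero entry) of
column `j` of `R`. -/
def IsLow {n : ℕ} (R : Matrix (Fin n) (Fin n) (ZMod 2)) (i j : Fin n) : Prop :=
  R i j ≠ 0 ∧ ∀ r, R r j ≠ 0 → r ≤ i

/-- A matrix is reduced if distinct nonzero columns have distinct lowest ones. -/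
def Reduced {n : ℕ} (R : Matrix (Fin n) (Fin n) (ZMod 2)) : Prop :=
  ∀ i j j', IsLow R i j → IsLow R i j' → j = j'

/-- Rank over ℤ/2 of the lower-left submatrix of `M` consisting of the rows
with (0-based) index ≥ i and the first j columns (0-based index < j). -/
noncomputable def rankLL {n : ℕ} (M : Matrix (Fin n) (Fin n) (ZMod 2)) (i j : ℕ) : ℕ :=
  (M.submatrix (fun r : {r : Fin n // i ≤ r.val} => r.1)
    (fun c : {c : Fin n // c.val < j} => c.1)).rank

open Matrix

/-! ### Auxiliary lemmas -/

lemma rankLL_colAdd {n : ℕ} (M : Matrix (Fin n) (Fin n) (ZMod 2)) (i0 j0 : Fin n)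
    (h : i0 < j0) (a b : ℕ) : rankLL (colAdd M i0 j0) a b = rankLL M a b := by
  unfold rankLL
  by_cases hb : j0.val < b
  · have hib : i0.val < b := lt_trans h hb
    have key : (colAdd M i0 j0).submatrix
        (fun r : {r : Fin n // a ≤ r.val} => r.1) (fun c : {c : Fin n // c.val < b} => c.1)
        = (M.submatrix (fun r : {r : Fin n // a ≤ r.val} => r.1)
            (fun c : {c : Fin n // c.val < b} => c.1)) *
          Matrix.transvection (⟨i0, hib⟩ : {c : Fin n // c.val < b}) ⟨j0, hb⟩ (1 : ZMod 2) := by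
      funext r c
      by_cases hc : c = ⟨j0, hb⟩
      · subst hc
        simp [Matrix.mul_apply, Matrix.transvection, Matrix.single, Matrix.one_apply,
          mul_add, Finset.sum_add_distrib, ite_and, Finset.sum_ite_eq, colAdd,
          Matrix.submatrix]
      · have h2 : c.1 ≠ j0 := fun hcc => hc (Subtype.ext hcc)
        simp [Matrix.mul_apply, Matrix.transvection, Matrix.single, Matrix.one_apply,
          mul_add, Finset.sum_add_distrib, ite_and, Finset.sum_ite_eq, Ne.symm hc, colAdd,
          Matrix.submatrix, h2]
    rw [key]
    apply Matrix.rank_mul_eq_left_of_isUnit_det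
    rw [Matrix.det_transvection_of_ne]
    · exact isUnit_one
    · intro hc
      exact absurd (congrArg (fun x => x.1.val) hc) (Fin.val_ne_of_ne (ne_of_lt h))
  · congr 1
    funext r c
    have h2 : c.1 ≠ j0 := by
      intro hcc
      exact hb (hcc ▸ c.2)
    simp [colAdd, Matrix.submatrix, h2]

lemma rankLL_reduces {n : ℕ} {M R : Matrix (Fin n) (Fin n) (ZMod 2)}
    (h : Reduces M R) (a b : ℕ) : rankLL R a b = rankLL M a b := by
  induction h with
  | refl => rfl
  | tail _ hstep ih =>
      obtain ⟨i, j, hij, rfl⟩ := hstep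
      rw [rankLL_colAdd _ _ _ hij]
      exact ih

lemma isLow_unique {n : ℕ} {R : Matrix (Fin n) (Fin n) (ZMod 2)} {i i' j : Fin n}
    (h : IsLow R i j) (h' : IsLow R i' j) : i = i' :=
  le_antisymm (h'.2 i h.1) (h.2 i' h'.1)

lemma exists_isLow {n : ℕ} {R : Matrix (Fin n) (Fin n) (ZMod 2)} {r j : Fin n}
    (h : R r j ≠ 0) : ∃ i, IsLow R i j ∧ r ≤ i := by
  classical
  have hne : (Finset.univ.filter (fun r => R r j ≠ 0)).Nonempty :=
    ⟨r, by simp [h]⟩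
  refine ⟨(Finset.univ.filter (fun r => R r j ≠ 0)).max' hne, ⟨?_, ?_⟩, ?_⟩
  · have := Finset.max'_mem _ hne
    simpa using this
  · intro r' hr'
    exact Finset.le_max' _ _ (by simp [hr'])
  · exact Finset.le_max' _ _ (by simp [h])

lemma rankLL_eq_count {n : ℕ} {R : Matrix (Fin n) (Fin n) (ZMod 2)} (hR : Reduced R)
    (a b : ℕ) :
    rankLL R a b =
      Set.ncard {p : Fin n × Fin n | IsLow R p.1 p.2 ∧ a ≤ p.1.val ∧ p.2.val < b} := by
  classical
  unfold rankLL
  rw [Matrix.rank_eq_finrank_span_cols]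
  set A := (R.submatrix (fun r : {r : Fin n // a ≤ r.val} => r.1)
    (fun c : {c : Fin n // c.val < b} => c.1)) with hA
  set T : Set {c : Fin n // c.val < b} :=
    {c | ∃ i : Fin n, IsLow R i c.1 ∧ a ≤ i.val} with hT
  set v : T → ({r : Fin n // a ≤ r.val} → ZMod 2) :=
    fun c r => R r.1 c.1.1 with hv
  have hspan : Submodule.span (ZMod 2) (Set.range Aᵀ)
      = Submodule.span (ZMod 2) (Set.range v) := by
    apply le_antisymm
    · rw [Submodule.span_le]
      rintro _ ⟨c, rfl⟩
      by_cases hc : c ∈ T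
      · exact Submodule.subset_span ⟨⟨c, hc⟩, rfl⟩
      · have hz : Aᵀ c = 0 := by
          funext r
          by_contra hnz
          have hnz' : R r.1 c.1 ≠ 0 := hnz
          obtain ⟨i, hi, hri⟩ := exists_isLow hnz'
          exact hc ⟨i, hi, le_trans r.2 hri⟩
        rw [hz]
        exact Submodule.zero_mem _
    · apply Submodule.span_mono
      rintro _ ⟨c, rfl⟩
      exact ⟨c.1, rfl⟩
  rw [show Set.range A.col = Set.range Aᵀ from rfl, hspan]
  have hlow : ∀ c : T, ∃ i : Fin n, IsLow R i c.1.1 ∧ a ≤ i.val := fun c => c.2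
  choose lw hlw halw using hlow
  have hlin : LinearIndependent (ZMod 2) v := by
    rw [Fintype.linearIndependent_iff]
    intro g hg
    by_contra hex
    push_neg at hex
    obtain ⟨c0, hc0⟩ := hex
    set s : Finset T := Finset.univ.filter (fun c => g c ≠ 0) with hs
    have hsne : s.Nonempty := ⟨c0, by simp [hs, hc0]⟩
    obtain ⟨cm, hcm, hmax⟩ := Finset.exists_max_image s lw hsne
    have hgcm : g cm ≠ 0 := by
      have := hcm; simp [hs] at this; exact this
    have hrow : a ≤ (lw cm).val := halw cm
    have := congrFun hg ⟨lw cm, hrow⟩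
    rw [Finset.sum_apply] at this
    have hsingle : ∑ c : T, (g c • v c) ⟨lw cm, hrow⟩ = g cm * R (lw cm) cm.1.1 := by
      rw [Finset.sum_eq_single cm]
      · simp [hv]
      · intro c _ hne
        by_cases hgc : g c = 0
        · simp [hgc]
        · have hcs : c ∈ s := by simp [hs, hgc]
          have hle : lw c ≤ lw cm := hmax c hcs
          have hlt : lw c < lw cm := by
            rcases lt_or_eq_of_le hle with h | h
            · exact h
            · exfalso
              have : c.1.1 = cm.1.1 := hR (lw cm) _ _ (h ▸ hlw c) (hlw cm)
              exact hne (Subtype.ext (Subtype.ext this))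
          have hz : R (lw cm) c.1.1 = 0 := by
            by_contra hnz
            exact absurd ((hlw c).2 _ hnz) (not_le_of_gt hlt)
          simp [hv, hz]
      · intro h; exact absurd (Finset.mem_univ cm) h
    rw [hsingle] at this
    exact (mul_ne_zero hgcm (hlw cm).1) this
  rw [finrank_span_eq_card hlin]
  rw [← Nat.card_coe_set_eq, ← Nat.card_eq_fintype_card]
  apply Nat.card_congr
  refine Equiv.ofBijective (fun c : T => (⟨(lw c, c.1.1), ⟨hlw c, halw c, c.1.2⟩⟩ :
    {p : Fin n × Fin n // IsLow R p.1 p.2 ∧ a ≤ p.1.val ∧ p.2.val < b})) ⟨?_, ?_⟩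
  · intro c c' hcc
    have h2 : c.1.1 = c'.1.1 := congrArg (fun p => p.1.2) hcc
    exact Subtype.ext (Subtype.ext h2)
  · rintro ⟨⟨i, j⟩, hij, hai, hjb⟩
    refine ⟨⟨⟨j, hjb⟩, ⟨i, hij, hai⟩⟩, ?_⟩
    have : lw ⟨⟨j, hjb⟩, ⟨i, hij, hai⟩⟩ = i :=
      isLow_unique (hlw _) hij
    simp [this]

lemma count_split_col {n : ℕ} (R : Matrix (Fin n) (Fin n) (ZMod 2)) (j : Fin n) (a : ℕ) :
    Set.ncard {p : Fin n × Fin n | IsLow R p.1 p.2 ∧ a ≤ p.1.val ∧ p.2.val < j.val + 1}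
    = Set.ncard {p : Fin n × Fin n | IsLow R p.1 p.2 ∧ a ≤ p.1.val ∧ p.2.val < j.val}
      + Set.ncard {p : Fin n × Fin n | IsLow R p.1 p.2 ∧ a ≤ p.1.val ∧ p.2 = j} := by
  rw [← Set.ncard_union_eq ?_ (Set.toFinite _) (Set.toFinite _)]
  · congr 1
    ext p
    simp only [Set.mem_setOf_eq, Set.mem_union]
    constructor
    · rintro ⟨h1, h2, h3⟩
      rcases lt_or_eq_of_le (Nat.lt_succ_iff.mp h3) with h | h
      · exact Or.inl ⟨h1, h2, h⟩
      · exact Or.inr ⟨h1, h2, Fin.ext h⟩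
    · rintro (⟨h1, h2, h3⟩ | ⟨h1, h2, h3⟩)
      · exact ⟨h1, h2, Nat.lt_succ_of_lt h3⟩
      · exact ⟨h1, h2, by rw [h3]; exact Nat.lt_succ_self _⟩
  · rw [Set.disjoint_left]
    rintro p ⟨_, _, h3⟩ ⟨_, _, h3'⟩
    rw [h3'] at h3
    exact lt_irrefl _ h3

open Classical in
lemma count_split_row {n : ℕ} (R : Matrix (Fin n) (Fin n) (ZMod 2)) (i j : Fin n) :
    Set.ncard {p : Fin n × Fin n | IsLow R p.1 p.2 ∧ i.val ≤ p.1.val ∧ p.2 = j}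
    = Set.ncard {p : Fin n × Fin n | IsLow R p.1 p.2 ∧ i.val + 1 ≤ p.1.val ∧ p.2 = j}
      + (if IsLow R i j then 1 else 0) := by
  by_cases hij : IsLow R i j
  · rw [if_pos hij]
    have h1 : {p : Fin n × Fin n | IsLow R p.1 p.2 ∧ i.val ≤ p.1.val ∧ p.2 = j}
        = {(i, j)} := by
      ext p
      simp only [Set.mem_setOf_eq, Set.mem_singleton_iff]
      constructor
      · rintro ⟨h1, h2, h3⟩
        subst h3
        have : p.1 = i := isLow_unique h1 hij
        exact Prod.ext this rfl
      · rintro rfl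
        exact ⟨hij, le_refl _, rfl⟩
    have h2 : {p : Fin n × Fin n | IsLow R p.1 p.2 ∧ i.val + 1 ≤ p.1.val ∧ p.2 = j}
        = ∅ := by
      ext p
      simp only [Set.mem_setOf_eq, Set.mem_empty_iff_false, iff_false]
      rintro ⟨ha, hb, hc⟩
      subst hc
      have hpi : p.1 = i := isLow_unique ha hij
      omega
    rw [h1, h2, Set.ncard_singleton, Set.ncard_empty]
  · rw [if_neg hij]
    have h1 : {p : Fin n × Fin n | IsLow R p.1 p.2 ∧ i.val ≤ p.1.val ∧ p.2 = j}
        = {p : Fin n × Fin n | IsLow R p.1 p.2 ∧ i.val + 1 ≤ p.1.val ∧ p.2 = j} := by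
      ext p
      simp only [Set.mem_setOf_eq]
      constructor
      · rintro ⟨h1, h2, h3⟩
        refine ⟨h1, ?_, h3⟩
        rcases lt_or_eq_of_le h2 with h | h
        · omega
        · exfalso
          have hpi : p.1 = i := Fin.ext h.symm
          rw [h3, hpi] at h1
          exact hij h1
      · rintro ⟨h1, h2, h3⟩
        exact ⟨h1, by omega, h3⟩
    rw [h1]
    omega

open Classical in
lemma count_identity {n : ℕ} (R : Matrix (Fin n) (Fin n) (ZMod 2)) (i j : Fin n) :
    Set.ncard {p : Fin n × Fin n | IsLow R p.1 p.2 ∧ i.val ≤ p.1.val ∧ p.2.val < j.val + 1}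
    + Set.ncard {p : Fin n × Fin n | IsLow R p.1 p.2 ∧ i.val + 1 ≤ p.1.val ∧ p.2.val < j.val}
    = Set.ncard {p : Fin n × Fin n | IsLow R p.1 p.2 ∧ i.val ≤ p.1.val ∧ p.2.val < j.val}
    + Set.ncard {p : Fin n × Fin n | IsLow R p.1 p.2 ∧ i.val + 1 ≤ p.1.val ∧ p.2.val < j.val + 1}
    + (if IsLow R i j then 1 else 0) := by
  rw [count_split_col R j i.val, count_split_col R j (i.val + 1), count_split_row]
  omega

lemma isLow_iff_rank {n : ℕ} {R : Matrix (Fin n) (Fin n) (ZMod 2)} (hR : Reduced R)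
    (i j : Fin n) :
    IsLow R i j ↔
      rankLL R i.val (j.val + 1) + rankLL R (i.val + 1) j.val
        = rankLL R i.val j.val + rankLL R (i.val + 1) (j.val + 1) + 1 := by
  classical
  rw [rankLL_eq_count hR, rankLL_eq_count hR, rankLL_eq_count hR, rankLL_eq_count hR]
  have hid := count_identity R i j
  by_cases hij : IsLow R i j
  · rw [if_pos hij] at hid
    simp only [hij, true_iff]
    omega
  · rw [if_neg hij] at hid
    simp only [hij, false_iff]
    omega

/-- left-to-right column additions preserve the ranks of all
lower-left submatrices; consequently, the set of pairs (low(R_j), j) over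
nonzero columns of a reduced form is independent of the reduction performed. -/
theorem rankLL_invariant_and_pairing_unique
    {n : ℕ} (M : Matrix (Fin n) (Fin n) (ZMod 2)) :
    (∀ R, Reduces M R → ∀ i j : ℕ, rankLL R i j = rankLL M i j) ∧
    (∀ R R', Reduces M R → Reduced R → Reduces M R' → Reduced R' →
      {p : Fin n × Fin n | IsLow R p.1 p.2} = {p : Fin n × Fin n | IsLow R' p.1 p.2}) := by
  refine ⟨fun R h i j => rankLL_reduces h i j, ?_⟩
  intro R R' h1 h2 h1' h2'
  ext p
  simp only [Set.mem_setOf_eq]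
  rw [isLow_iff_rank h2 p.1 p.2, isLow_iff_rank h2' p.1 p.2]
  simp only [rankLL_reduces h1, rankLL_reduces h1']
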